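/- Invariance of the moment matrix rank under affine linear transformations: Let β = (β_{i,j})_{i+j ≤ 2k} be a bivariate sequence with Riesz functional L_β, and let φ(x,y) = (a + bx + cy, d + ex + fy) with bf - ce ≠ 0. Define β̃_{i,j} = L_β(φ_1(x,y)^i φ_2(x,y)^j). Then M_k(β) is positive semidefinite if and only if M_k(β̃) is positive semidefinite, and rank M_k(β) = rank M_k(β̃). -/

import Mathlib

open Matrix MeasureTheory

/-- Index set of bivariate monomials x^i y^j of total degree ≤ k. -/
def momIdx (k : ℕ) : Finset (ℕ × ℕ) :=
  (Finset.range (k+1) ×ˢ Finset.range (k+1)).filter (fun p => p.1 + p.2 ≤ k)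

/-- The bivariate moment matrix M_k(β), indexed by monomials of total degree ≤ k. -/
def momMat (k : ℕ) (β : ℕ → ℕ → ℝ) : Matrix (momIdx k) (momIdx k) ℝ :=
  fun p q => β (p.1.1 + q.1.1) (p.1.2 + q.1.2)

/-- The Riesz functional of a bivariate sequence β applied to a polynomial. -/
noncomputable def riesz (β : ℕ → ℕ → ℝ) (p : MvPolynomial (Fin 2) ℝ) : ℝ :=
  ∑ m ∈ p.support, p.coeff m * β (m 0) (m 1)

namespace Stmt14Aux

open MvPolynomial

/-- exponent Finsupp of a pair -/
noncomputable def mexp (p : ℕ × ℕ) : Fin 2 →₀ ℕ := Finsupp.single 0 p.1 + Finsupp.single 1 p.2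

@[simp] lemma mexp_apply0 (p : ℕ × ℕ) : mexp p 0 = p.1 := by simp [mexp]
@[simp] lemma mexp_apply1 (p : ℕ × ℕ) : mexp p 1 = p.2 := by simp [mexp]

lemma eq_mexp (u : Fin 2 →₀ ℕ) : u = mexp (u 0, u 1) := by
  ext i; fin_cases i <;> simp

lemma mexp_injective : Function.Injective mexp := by
  intro p q h
  have h0 := congrArg (fun u : Fin 2 →₀ ℕ => u 0) h
  have h1 := congrArg (fun u : Fin 2 →₀ ℕ => u 1) h
  simp at h0 h1
  exact Prod.ext h0 h1

lemma mexp_add (p q : ℕ × ℕ) : mexp p + mexp q = mexp (p.1 + q.1, p.2 + q.2) := by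
  ext i; fin_cases i <;> simp

lemma mem_momIdx {k : ℕ} {p : ℕ × ℕ} : p ∈ momIdx k ↔ p.1 + p.2 ≤ k := by
  constructor
  · intro h; exact (Finset.mem_filter.mp h).2
  · intro h
    refine Finset.mem_filter.mpr ⟨Finset.mem_product.mpr ⟨?_, ?_⟩, h⟩ <;>
      simp <;> omega

lemma riesz_eq_sum (β : ℕ → ℕ → ℝ) (p : MvPolynomial (Fin 2) ℝ) (s : Finset (Fin 2 →₀ ℕ))
    (hs : p.support ⊆ s) : riesz β p = ∑ m ∈ s, p.coeff m * β (m 0) (m 1) :=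
  Finset.sum_subset hs (fun m _ hm => by
    simp [MvPolynomial.notMem_support_iff.mp hm])

@[simp] lemma riesz_zero (β : ℕ → ℕ → ℝ) : riesz β 0 = 0 := by simp [riesz]

lemma riesz_add (β : ℕ → ℕ → ℝ) (p q : MvPolynomial (Fin 2) ℝ) :
    riesz β (p + q) = riesz β p + riesz β q := by
  rw [riesz_eq_sum β (p + q) (p.support ∪ q.support) MvPolynomial.support_add,
    riesz_eq_sum β p (p.support ∪ q.support) Finset.subset_union_left,
    riesz_eq_sum β q (p.support ∪ q.support) Finset.subset_union_right,
    ← Finset.sum_add_distrib]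
  simp [MvPolynomial.coeff_add, add_mul]

lemma riesz_smul (β : ℕ → ℕ → ℝ) (c : ℝ) (p : MvPolynomial (Fin 2) ℝ) :
    riesz β (c • p) = c * riesz β p := by
  rw [riesz_eq_sum β (c • p) p.support (MvPolynomial.support_smul),
    riesz, Finset.mul_sum]
  simp [MvPolynomial.coeff_smul, mul_assoc]

lemma riesz_sum (β : ℕ → ℕ → ℝ) {ι : Type*} (s : Finset ι) (g : ι → MvPolynomial (Fin 2) ℝ) :
    riesz β (∑ i ∈ s, g i) = ∑ i ∈ s, riesz β (g i) := by
  induction s using Finset.cons_induction with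
  | empty => simp
  | cons i s hi ih => rw [Finset.sum_cons, Finset.sum_cons, riesz_add, ih]

lemma riesz_monomial (β : ℕ → ℕ → ℝ) (u : Fin 2 →₀ ℕ) (c : ℝ) :
    riesz β (monomial u c) = c * β (u 0) (u 1) := by
  rcases eq_or_ne c 0 with rfl | hc
  · simp [riesz]
  · rw [riesz]
    simp [MvPolynomial.support_monomial, hc, MvPolynomial.coeff_monomial]


lemma monomial_mexp (p : ℕ × ℕ) :
    (monomial (mexp p) (1:ℝ)) = X 0 ^ p.1 * X 1 ^ p.2 := by
  rw [MvPolynomial.X_pow_eq_monomial, MvPolynomial.X_pow_eq_monomial,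
    MvPolynomial.monomial_mul, mexp]
  norm_num

lemma sum_apply_eq (u : Fin 2 →₀ ℕ) : (u.sum fun _ e => e) = u 0 + u 1 := by
  rw [Finsupp.sum_fintype _ _ (fun _ => rfl), Fin.sum_univ_two]

/-- expansion of a polynomial of total degree ≤ k in the monomial basis indexed by momIdx k -/
lemma expand {k : ℕ} (P : MvPolynomial (Fin 2) ℝ) (hP : P.totalDegree ≤ k) :
    P = ∑ p ∈ momIdx k, (P.coeff (mexp p)) • monomial (mexp p) (1:ℝ) := by
  have h1 : ∀ p : ℕ × ℕ, (P.coeff (mexp p)) • monomial (mexp p) (1:ℝ)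
      = monomial (mexp p) (P.coeff (mexp p)) := by
    intro p; rw [MvPolynomial.smul_monomial, smul_eq_mul, mul_one]
  simp_rw [h1]
  have key : ∑ u ∈ P.support, monomial u (P.coeff u)
      = ∑ u ∈ Finset.image mexp (momIdx k), monomial u (P.coeff u) := by
    apply Finset.sum_subset
    · intro u hu
      have hd : u 0 + u 1 ≤ k := by
        have := MvPolynomial.le_totalDegree (p := P) hu
        rw [sum_apply_eq] at this
        omega
      exact Finset.mem_image.mpr ⟨(u 0, u 1), mem_momIdx.mpr hd, (eq_mexp u).symm⟩
    · intro u _ hu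
      rw [MvPolynomial.notMem_support_iff.mp hu, MvPolynomial.monomial_zero]
  calc P = ∑ u ∈ P.support, monomial u (P.coeff u) :=
        (MvPolynomial.support_sum_monomial_coeff P).symm
    _ = ∑ u ∈ Finset.image mexp (momIdx k), monomial u (P.coeff u) := key
    _ = ∑ p ∈ momIdx k, monomial (mexp p) (P.coeff (mexp p)) :=
        Finset.sum_image (fun x _ y _ h => mexp_injective h)

lemma totalDegree_aff (a b c : ℝ) :
    (MvPolynomial.C a + MvPolynomial.C b * MvPolynomial.X 0 +
      MvPolynomial.C c * MvPolynomial.X (1 : Fin 2)).totalDegree ≤ 1 := by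
  apply le_trans (MvPolynomial.totalDegree_add _ _)
  apply max_le
  · apply le_trans (MvPolynomial.totalDegree_add _ _)
    apply max_le
    · simp [MvPolynomial.totalDegree_C]
    · apply le_trans (MvPolynomial.totalDegree_mul _ _)
      simp [MvPolynomial.totalDegree_C, MvPolynomial.totalDegree_X]
  · apply le_trans (MvPolynomial.totalDegree_mul _ _)
    simp [MvPolynomial.totalDegree_C, MvPolynomial.totalDegree_X]

lemma totalDegree_bind_mono {k : ℕ} (g : Fin 2 → MvPolynomial (Fin 2) ℝ)
    (hg : ∀ i, (g i).totalDegree ≤ 1) {p : ℕ × ℕ} (hp : p ∈ momIdx k) :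
    ((MvPolynomial.bind₁ g) (monomial (mexp p) (1:ℝ))).totalDegree ≤ k := by
  rw [monomial_mexp, _root_.map_mul, map_pow, map_pow, MvPolynomial.bind₁_X_right,
    MvPolynomial.bind₁_X_right]
  apply le_trans (MvPolynomial.totalDegree_mul _ _)
  have h0 : (g 0 ^ p.1).totalDegree ≤ p.1 := by
    apply le_trans (MvPolynomial.totalDegree_pow _ _)
    calc p.1 * (g 0).totalDegree ≤ p.1 * 1 := Nat.mul_le_mul_left _ (hg 0)
    _ = p.1 := Nat.mul_one _
  have h1 : (g 1 ^ p.2).totalDegree ≤ p.2 := by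
    apply le_trans (MvPolynomial.totalDegree_pow _ _)
    calc p.2 * (g 1).totalDegree ≤ p.2 * 1 := Nat.mul_le_mul_left _ (hg 1)
    _ = p.2 := Nat.mul_one _
  have := mem_momIdx.mp hp
  omega

/-- Coefficient matrix of the substitution map in the monomial basis of degree ≤ k. -/
noncomputable def coefMat (k : ℕ) (g : Fin 2 → MvPolynomial (Fin 2) ℝ) :
    Matrix (momIdx k) (momIdx k) ℝ :=
  fun p q => ((MvPolynomial.bind₁ g) (monomial (mexp q.1) (1:ℝ))).coeff (mexp p.1)

lemma bind_mono_eq_sum {k : ℕ} (g : Fin 2 → MvPolynomial (Fin 2) ℝ)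
    (hg : ∀ i, (g i).totalDegree ≤ 1) (q : momIdx k) :
    (MvPolynomial.bind₁ g) (monomial (mexp q.1) (1:ℝ))
      = ∑ p : momIdx k, coefMat k g p q • monomial (mexp p.1) (1:ℝ) := by
  conv_lhs => rw [expand ((MvPolynomial.bind₁ g) (monomial (mexp q.1) (1:ℝ)))
    (totalDegree_bind_mono g hg q.2)]
  simp only [coefMat]
  exact (Finset.sum_coe_sort _ _).symm


lemma smul_mul_smul' (c d : ℝ) (x y : MvPolynomial (Fin 2) ℝ) :
    (c • x) * (d • y) = (c * d) • (x * y) := by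
  rw [smul_mul_assoc, mul_smul_comm, smul_smul]

lemma riesz_mono_mul (β : ℕ → ℕ → ℝ) (r s : ℕ × ℕ) :
    riesz β ((monomial (mexp r) (1:ℝ)) * (monomial (mexp s) (1:ℝ)))
      = β (r.1 + s.1) (r.2 + s.2) := by
  rw [MvPolynomial.monomial_mul, mexp_add, riesz_monomial]
  simp

lemma momMat_eq_conj (k : ℕ) (β β' : ℕ → ℕ → ℝ) (g : Fin 2 → MvPolynomial (Fin 2) ℝ)
    (hg : ∀ i, (g i).totalDegree ≤ 1)
    (hβ' : ∀ i j : ℕ, β' i j = riesz β (g 0 ^ i * g 1 ^ j)) :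
    momMat k β' = (coefMat k g)ᵀ * momMat k β * coefMat k g := by
  ext p q
  have hp := bind_mono_eq_sum g hg p
  have hq := bind_mono_eq_sum g hg q
  have hprod : g 0 ^ (p.1.1 + q.1.1) * g 1 ^ (p.1.2 + q.1.2)
      = (MvPolynomial.bind₁ g) (monomial (mexp p.1) (1:ℝ))
        * (MvPolynomial.bind₁ g) (monomial (mexp q.1) (1:ℝ)) := by
    rw [monomial_mexp, monomial_mexp, _root_.map_mul, _root_.map_mul,
      map_pow, map_pow, map_pow, map_pow, MvPolynomial.bind₁_X_right,
      MvPolynomial.bind₁_X_right, pow_add, pow_add]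
    ring
  show β' (p.1.1 + q.1.1) (p.1.2 + q.1.2) = _
  rw [hβ', hprod, hp, hq, Finset.sum_mul_sum]
  rw [riesz_sum]
  have hterm : ∀ r : momIdx k,
      riesz β (∑ s : momIdx k, (coefMat k g r p • monomial (mexp r.1) (1:ℝ))
        * (coefMat k g s q • monomial (mexp s.1) (1:ℝ)))
      = ∑ s : momIdx k, coefMat k g r p * coefMat k g s q * momMat k β r s := by
    intro r
    rw [riesz_sum]
    apply Finset.sum_congr rfl
    intro s _
    rw [smul_mul_smul', riesz_smul, riesz_mono_mul]
    rfl
  simp_rw [hterm]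
  rw [Matrix.mul_apply]
  simp_rw [Matrix.mul_apply, Matrix.transpose_apply, Finset.sum_mul]
  rw [Finset.sum_comm]
  apply Finset.sum_congr rfl
  intro r _
  apply Finset.sum_congr rfl
  intro s _
  ring

lemma coefMat_inv (k : ℕ) (g h : Fin 2 → MvPolynomial (Fin 2) ℝ)
    (hg : ∀ i, (g i).totalDegree ≤ 1)
    (hcomp : ∀ i, (MvPolynomial.bind₁ h) (g i) = X i) :
    coefMat k h * coefMat k g = 1 := by
  have hid : ∀ P : MvPolynomial (Fin 2) ℝ,
      (MvPolynomial.bind₁ h) ((MvPolynomial.bind₁ g) P) = P := by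
    intro P
    rw [MvPolynomial.bind₁_bind₁]
    have hX : (fun i => (MvPolynomial.bind₁ h) (g i)) = X := funext hcomp
    rw [hX, MvPolynomial.bind₁_X_left]
    rfl
  ext p q
  have key : (monomial (mexp q.1) (1:ℝ))
      = ∑ r : momIdx k, coefMat k g r q • (MvPolynomial.bind₁ h) (monomial (mexp r.1) (1:ℝ)) := by
    conv_lhs => rw [← hid (monomial (mexp q.1) (1:ℝ)), bind_mono_eq_sum g hg q]
    rw [map_sum]
    simp_rw [_root_.map_smul]
  have hcoeff := congrArg (MvPolynomial.coeff (mexp p.1)) key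
  rw [MvPolynomial.coeff_sum] at hcoeff
  simp_rw [MvPolynomial.coeff_smul, smul_eq_mul] at hcoeff
  rw [Matrix.mul_apply, Matrix.one_apply]
  have hrhs : ∀ r : momIdx k,
      coefMat k g r q * MvPolynomial.coeff (mexp p.1)
        ((MvPolynomial.bind₁ h) (monomial (mexp r.1) (1:ℝ)))
      = coefMat k h p r * coefMat k g r q := by
    intro r; rw [mul_comm]; rfl
  simp_rw [hrhs] at hcoeff
  rw [← hcoeff, MvPolynomial.coeff_monomial]
  by_cases hpq : p = q
  · subst hpq; simp
  · have : ¬ (mexp p.1 = mexp q.1) := by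
      intro hm
      exact hpq (Subtype.ext (mexp_injective hm))
    rw [if_neg (fun hm => this hm.symm), if_neg hpq]

end Stmt14Aux

open MvPolynomial Stmt14Aux in
/-- Invariance of positive semidefiniteness and rank of the moment matrix under invertible
affine linear transformations of the plane. -/
theorem stmt14 (k : ℕ) (β : ℕ → ℕ → ℝ) (a b c d e f : ℝ) (hdet : b * f - c * e ≠ 0)
    (β' : ℕ → ℕ → ℝ)
    (hβ' : ∀ i j : ℕ, β' i j = riesz β
      ((MvPolynomial.C a + MvPolynomial.C b * MvPolynomial.X 0 +
          MvPolynomial.C c * MvPolynomial.X 1) ^ i *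
       (MvPolynomial.C d + MvPolynomial.C e * MvPolynomial.X 0 +
          MvPolynomial.C f * MvPolynomial.X 1) ^ j)) :
    ((momMat k β).PosSemidef ↔ (momMat k β').PosSemidef) ∧
      (momMat k β).rank = (momMat k β').rank := by
  classical
  set D : ℝ := b * f - c * e with hD
  set g : Fin 2 → MvPolynomial (Fin 2) ℝ :=
    ![C a + C b * X 0 + C c * X 1, C d + C e * X 0 + C f * X 1] with hgdef
  set h : Fin 2 → MvPolynomial (Fin 2) ℝ :=
    ![C ((c*d - f*a)/D) + C (f/D) * X 0 + C (-c/D) * X 1,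
      C ((e*a - b*d)/D) + C (-e/D) * X 0 + C (b/D) * X 1] with hhdef
  have hg : ∀ i, (g i).totalDegree ≤ 1 := by
    intro i; fin_cases i <;> exact totalDegree_aff _ _ _
  have hcomp : ∀ i, (MvPolynomial.bind₁ h) (g i) = X i := by
    intro i
    fin_cases i <;>
    · simp only [hgdef, Fin.zero_eta, Fin.mk_one, Matrix.cons_val_zero, Matrix.cons_val_one, Matrix.head_cons, map_add,
        _root_.map_mul, MvPolynomial.bind₁_C_right, MvPolynomial.bind₁_X_right, hhdef]
      apply MvPolynomial.funext
      intro x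
      simp only [map_add, _root_.map_mul, MvPolynomial.eval_C, MvPolynomial.eval_X]
      field_simp
      ring
  have hβ'g : ∀ i j : ℕ, β' i j = riesz β (g 0 ^ i * g 1 ^ j) := by
    intro i j
    rw [hβ' i j, hgdef]
    simp
  have hM' : momMat k β' = (coefMat k g)ᵀ * momMat k β * coefMat k g :=
    momMat_eq_conj k β β' g hg hβ'g
  set A := coefMat k g with hA
  set B := coefMat k h with hB
  have hBA : B * A = 1 := coefMat_inv k g h hg hcomp
  have hAB : A * B = 1 := mul_eq_one_comm.mp hBA
  have hdetA : IsUnit A.det := Matrix.isUnit_det_of_left_inverse hBA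
  have hdetAT : IsUnit Aᵀ.det := by rwa [Matrix.det_transpose]
  have hTA : Aᴴ = Aᵀ := Matrix.conjTranspose_eq_transpose_of_trivial A
  have hTB : Bᴴ = Bᵀ := Matrix.conjTranspose_eq_transpose_of_trivial B
  have hback : Bᵀ * momMat k β' * B = momMat k β := by
    rw [hM']
    calc Bᵀ * (Aᵀ * momMat k β * A) * B
        = (Bᵀ * Aᵀ) * momMat k β * (A * B) := by
          simp only [Matrix.mul_assoc]
      _ = momMat k β := by
          rw [← Matrix.transpose_mul, hAB, Matrix.transpose_one, Matrix.one_mul,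
            Matrix.mul_one]
  constructor
  · constructor
    · intro hM
      rw [hM']
      have := hM.conjTranspose_mul_mul_same A
      rwa [hTA] at this
    · intro hM'p
      rw [← hback]
      have := hM'p.conjTranspose_mul_mul_same B
      rwa [hTB] at this
  · rw [hM', Matrix.rank_mul_eq_left_of_isUnit_det A (Aᵀ * momMat k β) hdetA,
      Matrix.rank_mul_eq_right_of_isUnit_det Aᵀ (momMat k β) hdetAT]
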